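/- Let D be an n×n matrix with entries in [0,1], zero diagonal, and all column sums at most 1. Suppose D is 'unisolated', meaning not every column of D sums to 1, and suppose that D contains no strict nonempty subset V such that the principal submatrix D_V is both isolated within D and irreducible. Then det(I − D) ≠ 0, i.e., I − D has full rank n. -/

import Mathlib

/-- If D is unisolated and contains no strict nonempty isolated
irreducible subset, then det(I − D) ≠ 0. -/
theorem stmt5 (n : ℕ) (D : Matrix (Fin n) (Fin n) ℝ)
    (hent : ∀ i j, D i j ∈ Set.Icc (0:ℝ) 1)
    (hdiag : ∀ i, D i i = 0)
    (hcol : ∀ j, ∑ i, D i j ≤ 1)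
    (hunisolated : ¬ ∀ j, ∑ i, D i j = 1)
    (hno : ∀ V : Finset (Fin n), V.Nonempty → V ≠ Finset.univ →
      ¬((∀ v ∉ V, ∀ u ∈ V, D v u = 0) ∧
        (∀ V' ⊆ V, V'.Nonempty → V' ≠ V →
          ¬(∀ v ∈ V \ V', ∀ u ∈ V', D v u = 0)))) :
    (1 - D).det ≠ 0 := by
  classical
  intro hdet
  -- pass to the transpose to get a right kernel vector
  have hdetT : (1 - D.transpose).det = 0 := by
    have : (1 - D.transpose) = (1 - D).transpose := by
      simp [Matrix.transpose_sub]
    rw [this, Matrix.det_transpose]; exact hdet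
  obtain ⟨x, hx0, hx⟩ := (Matrix.exists_mulVec_eq_zero_iff).mpr hdetT
  rw [Matrix.sub_mulVec, Matrix.one_mulVec, sub_eq_zero] at hx
  have heig : ∀ j, x j = ∑ i, D i j * x i := by
    intro j
    have h1 := congrFun hx j
    simpa [Matrix.mulVec, dotProduct, Matrix.transpose_apply] using h1
  -- a nonzero coordinate
  obtain ⟨i1, hi1⟩ : ∃ i, x i ≠ 0 := by
    by_contra h; push_neg at h; exact hx0 (funext h)
  -- the maximum of |x|
  obtain ⟨j0, -, hj0⟩ := Finset.exists_max_image Finset.univ (fun i => |x i|) ⟨i1, Finset.mem_univ i1⟩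
  set M := |x j0| with hM
  have hMpos : 0 < M := lt_of_lt_of_le (abs_pos.mpr hi1) (hj0 i1 (Finset.mem_univ i1))
  set S : Finset (Fin n) := Finset.univ.filter (fun j => |x j| = M) with hSdef
  have hj0S : j0 ∈ S := by simp [hSdef, hM]
  -- key: columns indexed by S sum to 1, and support of such columns is in S
  have hkey : ∀ j ∈ S, (∑ i, D i j = 1) ∧ ∀ i, D i j ≠ 0 → i ∈ S := by
    intro j hj
    have hjM : |x j| = M := by simpa [hSdef] using hj
    have h1 : M ≤ ∑ i, D i j * |x i| := by
      calc M = |x j| := hjM.symm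
        _ = |∑ i, D i j * x i| := by rw [heig j]
        _ ≤ ∑ i, |D i j * x i| := Finset.abs_sum_le_sum_abs _ _
        _ = ∑ i, D i j * |x i| := by
            apply Finset.sum_congr rfl; intro i _
            rw [abs_mul, abs_of_nonneg (hent i j).1]
    have h2 : ∀ i ∈ Finset.univ, D i j * |x i| ≤ D i j * M := by
      intro i _
      exact mul_le_mul_of_nonneg_left (hj0 i (Finset.mem_univ i)) (hent i j).1
    have h3 : ∑ i, D i j * M = (∑ i, D i j) * M := (Finset.sum_mul _ _ _).symm
    have h4 : (∑ i, D i j) * M ≤ M := by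
      nlinarith [hcol j, hMpos]
    have h5 : ∑ i, D i j * |x i| ≤ ∑ i, D i j * M := Finset.sum_le_sum h2
    have heq1 : ∑ i, D i j * |x i| = ∑ i, D i j * M := le_antisymm h5 (by linarith [h3 ▸ h4])
    have heq2 : (∑ i, D i j) * M = M := le_antisymm h4 (by linarith [h3 ▸ heq1])
    constructor
    · exact mul_right_cancel₀ (ne_of_gt hMpos) (by rw [one_mul]; exact heq2)
    · intro i hDi
      have := (Finset.sum_eq_sum_iff_of_le h2).mp heq1 i (Finset.mem_univ i)
      have hxiM : |x i| = M := mul_left_cancel₀ hDi this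
      simp [hSdef, hxiM]
  -- S is isolated
  have hSiso : ∀ v ∉ S, ∀ u ∈ S, D v u = 0 := by
    intro v hv u hu
    by_contra hne
    exact hv ((hkey u hu).2 v hne)
  -- S ≠ univ
  push_neg at hunisolated
  obtain ⟨j1, hj1⟩ := hunisolated
  have hj1S : j1 ∉ S := fun h => hj1 (hkey j1 h).1
  -- minimal isolated subset of S
  set P : Finset (Fin n) → Prop :=
    fun V => V.Nonempty ∧ (∀ v ∉ V, ∀ u ∈ V, D v u = 0) ∧ V ⊆ S with hPdef
  have hPS : P S := ⟨⟨j0, hj0S⟩, hSiso, le_refl S⟩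
  set C : Finset (Finset (Fin n)) := Finset.univ.filter P with hCdef
  obtain ⟨V, hVC, hVmin⟩ := Finset.exists_min_image C Finset.card ⟨S, Finset.mem_filter.mpr ⟨Finset.mem_univ S, hPS⟩⟩
  have hVP : P V := (Finset.mem_filter.mp hVC).2
  obtain ⟨hVne, hViso, hVS⟩ := hVP
  have hVnuniv : V ≠ Finset.univ := by
    intro h
    exact hj1S (hVS (h ▸ Finset.mem_univ j1))
  have := hno V hVne hVnuniv
  push_neg at this
  obtain ⟨V', hV'V, hV'ne, hV'neq, hV'iso⟩ := this hViso
  -- V' is itself isolated in D, contradiction with minimality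
  have hV'P : P V' := by
    refine ⟨hV'ne, ?_, hV'V.trans hVS⟩
    intro v hv u hu
    by_cases hvV : v ∈ V
    · exact hV'iso v (Finset.mem_sdiff.mpr ⟨hvV, hv⟩) u hu
    · exact hViso v hvV u (hV'V hu)
  have hlt : V'.card < V.card := Finset.card_lt_card (lt_of_le_of_ne hV'V hV'neq)
  have hge := hVmin V' (Finset.mem_filter.mpr ⟨Finset.mem_univ V', hV'P⟩)
  omega
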